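/- Let b = 0 or 1 and let γ : G → H = G/S₀ be a contraction. For T ∈ A^b_H define γ* T := T ∪ (G−T)_br if b = 0 and γ* T := T if b = 1. Then: (a) γ* T ∈ A^b_G and g(H − T) = g(G − γ* T); (b) if R ∈ A^b_H with T ⊆ R then γ* T ⊆ γ* R; (c) if δ : H → J is a contraction then (δ ∘ γ)* = γ* ∘ δ*. In other words, G ↦ A^b_G together with γ ↦ γ* is a grading-preserving contravariant functor from graphs with contractions to posets. -/

import Mathlib

/-!
Common framework: finite vertex-weighted multigraphs (loops and multiple edges
allowed), generalized orientations, divisors, contractions, and poset gadgets.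

A graph is encoded by a finite set `V ⊆ ℕ` of vertices, a finite set `E ⊆ ℕ`
of edges, an "ends" function assigning to each edge its ordered pair of
end-vertices (the two components encode the two half-edges), and a weight
function `w : ℕ → ℕ`.

A generalized orientation is a function `ℕ → Option EdgeDir`, where `none`
means the edge is absent (an orientation on a spanning subgraph `G − S` takes
the value `none` exactly on edges outside `E \ S`), `fwd`/`bwd` give the edge a
single direction, and `bi` makes the edge bioriented.
-/

open scoped Classical
open Finset

/-- Direction of an edge under a generalized orientation. -/
inductive EdgeDir : Type
  | fwd
  | bwd
  | bi
deriving DecidableEq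

/-- Generalized orientation data. -/
abbrev Orient : Type := ℕ → Option EdgeDir

/-- The number of ending (target) half-edges at the vertex `v` of an edge with
end-pair `p`, given its direction `d`.  A one-way oriented edge has exactly
one target end; a bioriented edge has both ends as targets. -/
def dirT : Option EdgeDir → ℕ × ℕ → ℕ → ℕ
  | none, _, _ => 0
  | some EdgeDir.fwd, p, v => if p.2 = v then 1 else 0
  | some EdgeDir.bwd, p, v => if p.1 = v then 1 else 0
  | some EdgeDir.bi, p, v => (if p.1 = v then 1 else 0) + (if p.2 = v then 1 else 0)

/-- Restriction of orientation data to the set `D` of kept edges. -/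
def restr (O : Orient) (D : Finset ℕ) : Orient := fun e => if e ∈ D then O e else none

/-- A finite vertex-weighted multigraph. -/
structure WGraph : Type where
  V : Finset ℕ
  E : Finset ℕ
  ends : ℕ → ℕ × ℕ
  w : ℕ → ℕ
  ends_mem : ∀ e ∈ E, (ends e).1 ∈ V ∧ (ends e).2 ∈ V

namespace WGraph

variable (G : WGraph)

/-- Edge set of the induced subgraph `(G−S)[Z]`: edges of `G − S` with both
ends in `Z`. -/
def indEdges (S Z : Finset ℕ) : Finset ℕ :=
  (G.E \ S).filter fun e => (G.ends e).1 ∈ Z ∧ (G.ends e).2 ∈ Z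

/-- The cut `E(Z, Zᶜ)` in `G − S`: edges of `G − S` with exactly one end in `Z`. -/
def cutEdges (S Z : Finset ℕ) : Finset ℕ :=
  (G.E \ S).filter fun e =>
    ((G.ends e).1 ∈ Z ∧ (G.ends e).2 ∉ Z) ∨ ((G.ends e).1 ∉ Z ∧ (G.ends e).2 ∈ Z)

/-- Adjacency via an edge belonging to `F ∩ E`. -/
def adjOn (F : Finset ℕ) (u v : ℕ) : Prop :=
  ∃ e ∈ F ∩ G.E, G.ends e = (u, v) ∨ G.ends e = (v, u)

/-- Number of connected components of the subgraph with vertex set `W` and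
edge set `F`. -/
noncomputable def ncomp (W F : Finset ℕ) : ℕ :=
  Nat.card (Quot (fun u v : {x : ℕ // x ∈ W} => G.adjOn F u.1 v.1))

/-- The subgraph with vertex set `W` and edge set `F` is connected. -/
def ConnSub (W F : Finset ℕ) : Prop := G.ncomp W F = 1

/-- `G` is connected. -/
def Connected : Prop := G.ConnSub G.V G.E

/-- Genus of the subgraph with vertex set `W` and edge set `F`:
`∑_{v ∈ W} w(v) − |W| + |F| + c`. -/
noncomputable def subGenus (W F : Finset ℕ) : ℤ :=
  (∑ v ∈ W, (G.w v : ℤ)) - (W.card : ℤ) + (((F ∩ G.E).card : ℤ)) + (G.ncomp W F : ℤ)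

/-- The genus of `G`. -/
noncomputable def genus : ℤ := G.subGenus G.V G.E

/-- The degree of a vertex: the number of half-edges having `v` as end. -/
def deg (v : ℕ) : ℕ :=
  ∑ e ∈ G.E, ((if (G.ends e).1 = v then 1 else 0) + (if (G.ends e).2 = v then 1 else 0))

/-- `e` is a bridge of `G − S`: removing it increases the number of connected
components. -/
def IsBridge (S : Finset ℕ) (e : ℕ) : Prop :=
  e ∈ G.E \ S ∧ G.ncomp G.V (G.E \ S) < G.ncomp G.V (G.E \ insert e S)

/-- The set of bridges of `G − S`. -/
noncomputable def bridges (S : Finset ℕ) : Finset ℕ := (G.E \ S).filter (G.IsBridge S)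

/-- `T` is a cut of `G`, i.e. `T = E(Z, Zᶜ)` for some `∅ ⊊ Z ⊊ V`. -/
def IsCut (T : Finset ℕ) : Prop :=
  ∃ Z, Z ⊆ G.V ∧ Z.Nonempty ∧ Z ≠ G.V ∧ T = G.cutEdges ∅ Z

/-- `W` is (the vertex set of) a connected component of `G − S`. -/
def IsCompOf (S W : Finset ℕ) : Prop :=
  W ⊆ G.V ∧ W.Nonempty ∧ G.ConnSub W (G.indEdges S W) ∧ G.cutEdges S W = ∅

/-- The poset `A^b_G`: for `b = 0` the sets `S ⊆ E` with `G − S` bridgeless,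
for `b = 1` the sets `S ⊆ E` with `G − S` connected. -/
def Ab (b : ℕ) (S : Finset ℕ) : Prop :=
  S ⊆ G.E ∧ ((b = 0 ∧ ∀ e, ¬ G.IsBridge S e) ∨ (b = 1 ∧ G.ConnSub G.V (G.E \ S)))

/-- `G` is a stable graph of genus `g`: connected, of genus `g`, and every
vertex of weight `0` has degree at least `3`. -/
noncomputable def Stable (g : ℕ) : Prop :=
  G.Connected ∧ G.genus = (g : ℤ) ∧ ∀ v ∈ G.V, G.w v = 0 → 3 ≤ G.deg v

/-! ### Generalized orientations on spanning subgraphs -/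

/-- `O` is orientation data for the spanning subgraph `G − S` (it is defined
exactly on the edges of `G − S`). -/
def IsOrientOn (S : Finset ℕ) (O : Orient) : Prop :=
  ∀ e, O e ≠ none ↔ e ∈ G.E \ S

/-- The set of bioriented edges of `O`. -/
def biE (O : Orient) : Finset ℕ := G.E.filter fun e => O e = some EdgeDir.bi

/-- `t^O_v`: the number of half-edges having `v` as target. -/
def tOr (O : Orient) (v : ℕ) : ℕ := ∑ e ∈ G.E, dirT (O e) (G.ends e) v

/-- `t^O(Z)`: the number of edges of `G − S` not contained in `(G−S)[Z]`
having a target in `Z`. -/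
def tCut (S : Finset ℕ) (O : Orient) (Z : Finset ℕ) : ℕ :=
  ∑ e ∈ (G.E \ S) \ G.indEdges S Z, ∑ v ∈ Z, dirT (O e) (G.ends e) v

/-- The divisor `d^O` of a `b`-orientation `O` on `G − S`:
`d^O_v = w(v) − 1 + t^O_v` if `G − S` has edges, and `d^O_v = w(v) − 1 + b`
otherwise; it is supported on `V`. -/
noncomputable def divOr (S : Finset ℕ) (b : ℕ) (O : Orient) : ℕ → ℤ :=
  fun v => if v ∈ G.V then
      (if G.E \ S = ∅ then (G.w v : ℤ) - 1 + (b : ℤ) else (G.w v : ℤ) - 1 + (G.tOr O v : ℤ))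
    else 0

/-- Equivalence of generalized orientations on `G − S`:  both are orientations
on `G − S` and they have the same divisor. -/
noncomputable def equivOr (S : Finset ℕ) (b : ℕ) (O O' : Orient) : Prop :=
  G.IsOrientOn S O ∧ G.IsOrientOn S O' ∧ G.divOr S b O = G.divOr S b O'

/-- `O` is a totally cyclic orientation on `G − S`: every nonempty cut
`E(Z,Zᶜ)` contains an edge with target in `Z` and an edge with target in `Zᶜ`. -/
def TotCyc (S : Finset ℕ) (O : Orient) : Prop :=
  ∀ Z : Finset ℕ, Z ⊆ G.V → Z.Nonempty → Z ≠ G.V → (G.cutEdges S Z).Nonempty →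
    (∃ e ∈ G.cutEdges S Z, ∃ v ∈ Z, 0 < dirT (O e) (G.ends e) v) ∧
    (∃ e ∈ G.cutEdges S Z, ∃ v ∈ G.V \ Z, 0 < dirT (O e) (G.ends e) v)

/-- `O` is `e₀`-rooted on `G − S`: for every `Z ⊊ V` with `e₀` an edge of
`(G−S)[Z]`, the cut `E(Z,Zᶜ)` contains an edge with target in `Zᶜ`. -/
def RootedAt (S : Finset ℕ) (O : Orient) (e₀ : ℕ) : Prop :=
  ∀ Z : Finset ℕ, Z ⊆ G.V → Z ≠ G.V → e₀ ∈ G.indEdges S Z →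
    ∃ e ∈ G.cutEdges S Z, ∃ v ∈ G.V \ Z, 0 < dirT (O e) (G.ends e) v

/-- `O` is a rooted `1`-orientation on `G − S`:  it has exactly one bioriented
edge, at which it is rooted.  By convention, if `G − S` consists of a single
vertex (and no edges), the empty orientation is rooted. -/
def Rooted1 (S : Finset ℕ) (O : Orient) : Prop :=
  (∃ e₀, G.biE O = {e₀} ∧ G.RootedAt S O e₀) ∨ (G.E \ S = ∅ ∧ G.V.card = 1)

/-- `O ∈ 𝒪^b(G−S)`:  for `b = 0`, a totally cyclic orientation on `G − S`;
for `b = 1`, a rooted `1`-orientation on `G − S`. -/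
def MemOb (S : Finset ℕ) (b : ℕ) (O : Orient) : Prop :=
  G.IsOrientOn S O ∧
    ((b = 0 ∧ G.biE O = ∅ ∧ G.TotCyc S O) ∨ (b = 1 ∧ G.Rooted1 S O))

/-- `O` is a `b`-orientation on `G − S` (exactly `b` bioriented edges; by
convention the empty orientation on a one-vertex edgeless graph counts as a
`1`-orientation). -/
def IsbOr (S : Finset ℕ) (b : ℕ) (O : Orient) : Prop :=
  G.IsOrientOn S O ∧
    ((G.biE O).card = b ∨ (G.E \ S = ∅ ∧ G.V.card = 1 ∧ b = 1))

/-! ### Posets of orientations on spanning subgraphs -/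

/-- The order of `𝒪𝒫^b_G` on pairs `(S, O_S)`:  `(S,O_S) ≤ (T,O_T)` iff
`T ⊆ S` and the restriction of `O_T` to `G − S` is `O_S`. -/
def leOP (p q : Finset ℕ × Orient) : Prop :=
  q.1 ⊆ p.1 ∧ restr q.2 (G.E \ p.1) = p.2

/-- The order of `𝒪̄𝒫^b_G` on pairs (representing classes): `(S,O̅_S) ≤ (T,O̅_T)`
iff `T ⊆ S` and some representative of `O̅_T` restricts on `G − S` to some
representative of `O̅_S`. -/
noncomputable def leOPbar (b : ℕ) (p q : Finset ℕ × Orient) : Prop :=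
  q.1 ⊆ p.1 ∧ ∃ O', G.equivOr q.1 b O' q.2 ∧
    G.equivOr p.1 b (restr O' (G.E \ p.1)) p.2

/-- Equality in `𝒪̄𝒫^b_G`: same subgraph and equivalent orientations. -/
noncomputable def eqOP (b : ℕ) (p q : Finset ℕ × Orient) : Prop :=
  p.1 = q.1 ∧ G.equivOr p.1 b p.2 q.2

/-- Membership in `𝒪𝒫^b_G`. -/
def POb (b : ℕ) (p : Finset ℕ × Orient) : Prop :=
  G.Ab b p.1 ∧ G.MemOb p.1 b p.2

/-! ### Stable divisors -/

/-- Stable divisors on `G − S` of degree `g(G−S) − c(G−S) + b` (`b = 0, 1`):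
for `b = 1`, `G − S` is connected, the degree is `g(G−S)` and
`|d_Z| > g(Z) − 1` for every `Z ⊆ V`; for `b = 0`, the restriction of `d` to
every connected component `W` of `G − S` has degree `g(W) − 1` and satisfies
`|d_Z| > g(Z) − 1` for every `∅ ≠ Z ⊊ W`. -/
noncomputable def StableDiv (S : Finset ℕ) (b : ℕ) (d : ℕ → ℤ) : Prop :=
  (∀ v, v ∉ G.V → d v = 0) ∧
  ((b = 1 ∧ G.ConnSub G.V (G.E \ S) ∧
      (∑ v ∈ G.V, d v) = G.subGenus G.V (G.E \ S) ∧
      ∀ Z ⊆ G.V, G.subGenus Z (G.indEdges S Z) - 1 < ∑ v ∈ Z, d v) ∨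
   (b = 0 ∧ ∀ W, G.IsCompOf S W →
      (∑ v ∈ W, d v) = G.subGenus W (G.indEdges S W) - 1 ∧
      ∀ Z ⊆ W, Z.Nonempty → Z ≠ W →
        G.subGenus Z (G.indEdges S Z) - 1 < ∑ v ∈ Z, d v))

/-! ### Contractions -/

/-- The relation identifying the two ends of each edge in `S₀`. -/
def conRel (S₀ : Finset ℕ) (u v : ℕ) : Prop :=
  ∃ e ∈ S₀ ∩ G.E, G.ends e = (u, v) ∨ G.ends e = (v, u)

/-- Representative (the least element) of the class of `v` under the
equivalence generated by identifying the ends of the edges in `S₀`. -/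
noncomputable def crep (S₀ : Finset ℕ) (v : ℕ) : ℕ :=
  sInf {u | Relation.EqvGen (G.conRel S₀) u v}

/-- The (weighted) edge contraction `G/S₀`: every connected component of the
subgraph spanned by `S₀` is contracted to a single vertex, whose weight is the
genus of that component; `E(G/S₀) = E(G) \ S₀`. -/
noncomputable def contract (S₀ : Finset ℕ) : WGraph where
  V := G.V.image (G.crep S₀)
  E := G.E \ S₀
  ends := fun e => (G.crep S₀ (G.ends e).1, G.crep S₀ (G.ends e).2)
  w := fun v =>
    (G.subGenus (G.V.filter fun u => G.crep S₀ u = v)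
      (G.indEdges (G.E \ S₀) (G.V.filter fun u => G.crep S₀ u = v))).toNat
  ends_mem := by
    intro e he
    rw [Finset.mem_sdiff] at he
    exact ⟨Finset.mem_image_of_mem _ (G.ends_mem e he.1).1,
           Finset.mem_image_of_mem _ (G.ends_mem e he.1).2⟩

/-- Deletion of the edges in `T` (a spanning subgraph, as a graph). -/
def ddel (T : Finset ℕ) : WGraph where
  V := G.V
  E := G.E \ T
  ends := G.ends
  w := G.w
  ends_mem := fun e he => G.ends_mem e (Finset.mem_sdiff.mp he).1

/-- Pullback `γ* T` of an edge set along the contraction `γ : G → G/S₀`: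
`T ∪ (G−T)_br` for `b = 0`, and `T` for `b = 1`. -/
noncomputable def pullStar (b : ℕ) (T : Finset ℕ) : Finset ℕ :=
  if b = 0 then T ∪ G.bridges T else T

/-- Pushforward of a divisor along the contraction `γ : G → G/S₀`:
`(γ_* d)_v = ∑_{z ∈ γ⁻¹(v)} d_z`. -/
noncomputable def pushDiv (S₀ : Finset ℕ) (d : ℕ → ℤ) : ℕ → ℤ :=
  fun v => ∑ z ∈ G.V.filter (fun u => G.crep S₀ u = v), d z

/-- The divisor `c^{γ,S}` on `G/S₀`: `c^{γ,S}_v = #{e ∈ S₀ ∩ S : γ(e) = v}`. -/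
noncomputable def cGamma (S₀ S : Finset ℕ) : ℕ → ℤ :=
  fun v => ((((S₀ ∩ S) ∩ G.E).filter (fun e => G.crep S₀ (G.ends e).1 = v)).card : ℤ)

/-- The relation "`q` is a value of `γ̄_*` at `p`" for the contraction
`γ : G → G/S₀` acting on classes of orientations: `q` is the restriction to
`(G/S₀) − γ_* S` of a representative of the class of `p` having no bioriented
edge in `S₀` (when `(G/S₀) − γ_*S` has no edges, any representative serves). -/
noncomputable def pushRel (S₀ : Finset ℕ) (b : ℕ) (p q : Finset ℕ × Orient) : Prop :=
  ∃ O', G.equivOr p.1 b O' p.2 ∧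
    ((∀ e ∈ S₀, O' e ≠ some EdgeDir.bi) ∨ G.E \ (S₀ ∪ p.1) = ∅) ∧
    q.1 = p.1 \ S₀ ∧ q.2 = restr O' (G.E \ (S₀ ∪ p.1))

/-! ### Isomorphisms and directed reachability -/

/-- `(fV, fE)` is an isomorphism from `G` to `H`. -/
def IsoMaps (H : WGraph) (fV fE : ℕ → ℕ) : Prop :=
  Set.BijOn fV ↑G.V ↑H.V ∧ Set.BijOn fE ↑G.E ↑H.E ∧
  (∀ e ∈ G.E, H.ends (fE e) = (fV (G.ends e).1, fV (G.ends e).2) ∨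
              H.ends (fE e) = (fV (G.ends e).2, fV (G.ends e).1)) ∧
  (∀ v ∈ G.V, H.w (fV v) = G.w v)

/-- `G` and `H` are isomorphic graphs. -/
def Iso (H : WGraph) : Prop := ∃ fV fE, G.IsoMaps H fV fE

/-- The edge-contraction relation: `G ≤ H` iff `H = G/S₀` (up to isomorphism)
for some `S₀ ⊆ E(G)`. -/
noncomputable def contractLE (H : WGraph) : Prop :=
  ∃ S₀ ⊆ G.E, (G.contract S₀).Iso H

/-- One step from `u` to `v` along an `O`-directed edge (a bioriented edge may
be traversed in both directions). -/
def dirStep (O : Orient) (u v : ℕ) : Prop :=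
  ∃ e ∈ G.E,
    (O e = some EdgeDir.fwd ∧ G.ends e = (u, v)) ∨
    (O e = some EdgeDir.bwd ∧ G.ends e = (v, u)) ∨
    (O e = some EdgeDir.bi ∧ (G.ends e = (u, v) ∨ G.ends e = (v, u)))

/-- There is an `O`-directed path from the (bioriented) edge `e` to the
vertex `v`: a directed path starting at one of the ends of `e` and ending
at `v`. -/
def dirReachFromEdge (O : Orient) (e v : ℕ) : Prop :=
  ∃ u, ((G.ends e).1 = u ∨ (G.ends e).2 = u) ∧
    Relation.ReflTransGen (G.dirStep O) u v

end WGraph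

/-! ### Generic poset gadgets (for sets with an order, modulo an equivalence) -/

/-- `le` is a partial order on `{a | P a}` modulo the identification `eqv`. -/
def IsPartialOrderOnMod {α : Type*} (P : α → Prop) (eqv le : α → α → Prop) : Prop :=
  (∀ a, P a → le a a) ∧
  (∀ a b c, P a → P b → P c → le a b → le b c → le a c) ∧
  (∀ a b, P a → P b → le a b → le b a → eqv a b)

/-- `le` is a partial order on `{a | P a}`. -/
def IsPartialOrderOn {α : Type*} (P : α → Prop) (le : α → α → Prop) : Prop :=
  IsPartialOrderOnMod P (· = ·) le

/-- `a'` covers `a` in `{a | P a}` ordered by `le`, modulo `eqv`. -/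
def CoversOnMod {α : Type*} (P : α → Prop) (eqv le : α → α → Prop) (a a' : α) : Prop :=
  P a ∧ P a' ∧ le a a' ∧ ¬ eqv a a' ∧
    ∀ c, P c → le a c → le c a' → (eqv c a ∨ eqv c a')

/-- `ρ` is a rank on `{a | P a}` ordered by `le`, modulo `eqv`:  along every
covering relation it increases by exactly `1`. -/
def IsRankOnMod {α : Type*} (P : α → Prop) (eqv le : α → α → Prop) (ρ : α → ℕ) : Prop :=
  ∀ a a', CoversOnMod P eqv le a a' → ρ a' = ρ a + 1

/-- `a'` covers `a` in `{a | P a}` ordered by `le`. -/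
def CoversOn {α : Type*} (P : α → Prop) (le : α → α → Prop) : α → α → Prop :=
  CoversOnMod P (· = ·) le

/-- `ρ` is a rank on `{a | P a}` ordered by `le`. -/
def IsRankOn {α : Type*} (P : α → Prop) (le : α → α → Prop) (ρ : α → ℕ) : Prop :=
  IsRankOnMod P (· = ·) le ρ

/-- `f` is a quotient of posets from `({a | P a}, lea)` onto `({b | Q b}, leb)`:
an order-preserving surjection such that any relation downstairs lifts to a
relation upstairs. -/
def IsPosetQuotient {α β : Type*} (P : α → Prop) (Q : β → Prop)
    (lea : α → α → Prop) (leb : β → β → Prop) (f : α → β) : Prop :=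
  (∀ a, P a → Q (f a)) ∧
  (∀ a a', P a → P a' → lea a a' → leb (f a) (f a')) ∧
  (∀ b, Q b → ∃ a, P a ∧ f a = b) ∧
  (∀ b b', Q b → Q b' → leb b b' →
    ∃ a a', P a ∧ P a' ∧ f a = b ∧ f a' = b' ∧ lea a a')

/-! ### Structures over the moduli of stable graphs -/

/-- Pairs `(G, S)` with `G` stable of genus `g` and `S ∈ A^b_G`. -/
noncomputable def PairStab (g b : ℕ) (p : WGraph × Finset ℕ) : Prop :=
  p.1.Stable g ∧ p.1.Ab b p.2

/-- Isomorphism of pairs `(G, S)`. -/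
def PairIso (p q : WGraph × Finset ℕ) : Prop :=
  ∃ fV fE, p.1.IsoMaps q.1 fV fE ∧ p.2.image fE = q.2

/-- The order on `A^b_g`: `(G,S) ≤ (H,T)` iff there is a contraction
`γ : G → H` (a contraction of `G` followed by an isomorphism onto `H`) with
`γ* T ⊆ S`. -/
noncomputable def AgLE (b : ℕ) (p q : WGraph × Finset ℕ) : Prop :=
  ∃ S₀ ⊆ p.1.E, ∃ fV fE, (p.1.contract S₀).IsoMaps q.1 fV fE ∧
    p.1.pullStar b (((p.1.contract S₀).E).filter fun e => fE e ∈ q.2) ⊆ p.2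

/-- Triples `(G, S, O̅_S)` with `G` stable of genus `g`, `S ∈ A^b_G` and
`O_S ∈ 𝒪^b(G−S)` (representing elements of `𝒪̄𝒫^b_g`). -/
noncomputable def TripP (g b : ℕ) (x : WGraph × Finset ℕ × Orient) : Prop :=
  x.1.Stable g ∧ x.1.Ab b x.2.1 ∧ x.1.MemOb x.2.1 b x.2.2

/-- Identification of triples: an isomorphism of the underlying graphs
carrying the subgraph and the class of the orientation (i.e. its divisor) of
one to the other. -/
noncomputable def TripEq (b : ℕ) (x y : WGraph × Finset ℕ × Orient) : Prop :=
  ∃ fV fE, x.1.IsoMaps y.1 fV fE ∧ x.2.1.image fE = y.2.1 ∧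
    ∀ v ∈ x.1.V, y.1.divOr y.2.1 b y.2.2 (fV v) = x.1.divOr x.2.1 b x.2.2 v

/-- The order on `𝒪̄𝒫^b_g`: `(G, O̅_S) ≤ (H, O̅_T)` iff there is a contraction
`γ : G → H` with `γ* T ⊆ S` and `γ̄_* O̅_S ≤ O̅_T`, the latter meaning that the
restriction of `O̅_T` to `H − γ_* S` equals `γ̄_* O̅_S` (compared through the
isomorphism, via the divisors). -/
noncomputable def OPgLE (b : ℕ) (x y : WGraph × Finset ℕ × Orient) : Prop :=
  ∃ S₀ ⊆ x.1.E, ∃ fV fE, (x.1.contract S₀).IsoMaps y.1 fV fE ∧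
    x.1.pullStar b (((x.1.contract S₀).E).filter fun e => fE e ∈ y.2.1) ⊆ x.2.1 ∧
    ∃ O', x.1.equivOr x.2.1 b O' x.2.2 ∧
      ((∀ e ∈ S₀, O' e ≠ some EdgeDir.bi) ∨ x.1.E \ (S₀ ∪ x.2.1) = ∅) ∧
      ∀ v ∈ (x.1.contract S₀).V,
        y.1.divOr ((x.2.1 \ S₀).image fE) b
            (restr y.2.2 (y.1.E \ (x.2.1 \ S₀).image fE)) (fV v)
          = (x.1.contract S₀).divOr (x.2.1 \ S₀) b
              (restr O' (x.1.E \ (S₀ ∪ x.2.1))) v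

set_option linter.unusedSectionVars false

section QuotCard

open Relation

variable {α : Type*} {r s : α → α → Prop} {a b : α}

theorem eqvgen_pair_cases
    (hs : ∀ x y, s x y ↔ r x y ∨ (x = a ∧ y = b) ∨ (x = b ∧ y = a))
    {x y : α} (h : EqvGen s x y) :
    EqvGen r x y ∨ (EqvGen r x a ∧ EqvGen r b y) ∨ (EqvGen r x b ∧ EqvGen r a y) := by
  induction h with
  | rel x y h =>
    rcases (hs x y).1 h with h | ⟨rfl, rfl⟩ | ⟨rfl, rfl⟩
    · exact Or.inl (EqvGen.rel _ _ h)
    · exact Or.inr (Or.inl ⟨EqvGen.refl _, EqvGen.refl _⟩)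
    · exact Or.inr (Or.inr ⟨EqvGen.refl _, EqvGen.refl _⟩)
  | refl x => exact Or.inl (EqvGen.refl x)
  | symm x y _ ih =>
    rcases ih with h | ⟨h1, h2⟩ | ⟨h1, h2⟩
    · exact Or.inl (EqvGen.symm _ _ h)
    · exact Or.inr (Or.inr ⟨EqvGen.symm _ _ h2, EqvGen.symm _ _ h1⟩)
    · exact Or.inr (Or.inl ⟨EqvGen.symm _ _ h2, EqvGen.symm _ _ h1⟩)
  | trans x z y _ _ ih1 ih2 =>
    rcases ih1 with h | ⟨h1, h2⟩ | ⟨h1, h2⟩ <;>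
      rcases ih2 with g | ⟨g1, g2⟩ | ⟨g1, g2⟩
    · exact Or.inl (h.trans _ _ _ g)
    · exact Or.inr (Or.inl ⟨h.trans _ _ _ g1, g2⟩)
    · exact Or.inr (Or.inr ⟨h.trans _ _ _ g1, g2⟩)
    · exact Or.inr (Or.inl ⟨h1, h2.trans _ _ _ g⟩)
    · exact Or.inr (Or.inl ⟨h1, g2⟩)
    · exact Or.inl (h1.trans _ _ _ g2)
    · exact Or.inr (Or.inr ⟨h1, h2.trans _ _ _ g⟩)
    · exact Or.inl (h1.trans _ _ _ g2)
    · exact Or.inr (Or.inr ⟨h1, g2⟩)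

variable [Finite α]

private noncomputable def Fmap (hrs : ∀ x y, r x y → s x y) : Quot r → Quot s :=
  Quot.map id (fun x y h => hrs x y h)

theorem card_quot_le_of_imp (hrs : ∀ x y, r x y → s x y) :
    Nat.card (Quot s) ≤ Nat.card (Quot r) := by
  have : Function.Surjective (Fmap hrs) := by
    intro q
    obtain ⟨x, rfl⟩ := Quot.exists_rep q
    exact ⟨Quot.mk r x, rfl⟩
  have : Finite (Quot r) := Finite.of_surjective (Quot.mk r) (fun q => Quot.exists_rep q)
  exact Nat.card_le_card_of_surjective _ ‹Function.Surjective _›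

theorem card_quot_of_conn
    (hs : ∀ x y, s x y ↔ r x y ∨ (x = a ∧ y = b) ∨ (x = b ∧ y = a))
    (hab : EqvGen r a b) : Nat.card (Quot r) = Nat.card (Quot s) := by
  have hrs : ∀ x y, r x y → s x y := fun x y h => (hs x y).2 (Or.inl h)
  refine Nat.card_eq_of_bijective (Fmap hrs) ⟨?_, ?_⟩
  · intro q q'
    obtain ⟨x, rfl⟩ := Quot.exists_rep q
    obtain ⟨x', rfl⟩ := Quot.exists_rep q'
    intro h
    have h' : Quot.mk s x = Quot.mk s x' := h
    have := eqvgen_pair_cases hs (Quot.eq.1 h')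
    rcases this with h | ⟨h1, h2⟩ | ⟨h1, h2⟩
    · exact Quot.eqvGen_sound h
    · exact Quot.eqvGen_sound ((h1.trans _ _ _ hab).trans _ _ _ h2)
    · exact Quot.eqvGen_sound ((h1.trans _ _ _ (EqvGen.symm _ _ hab)).trans _ _ _ h2)
  · intro q
    obtain ⟨x, rfl⟩ := Quot.exists_rep q
    exact ⟨Quot.mk r x, rfl⟩

private noncomputable def Jmap
    (hrs : ∀ x y, r x y → s x y) (a : α) : Quot r → Option (Quot s) :=
  fun q => if q = Quot.mk r a then none else some (Fmap hrs q)

theorem jmap_injective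
    (hs : ∀ x y, s x y ↔ r x y ∨ (x = a ∧ y = b) ∨ (x = b ∧ y = a)) :
    Function.Injective (Jmap (fun x y h => (hs x y).2 (Or.inl h)) a) := by
  intro q q' h
  unfold Jmap at h
  by_cases h1 : q = Quot.mk r a
  · by_cases h2 : q' = Quot.mk r a
    · exact h1.trans h2.symm
    · rw [if_pos h1, if_neg h2] at h; cases h
  · by_cases h2 : q' = Quot.mk r a
    · rw [if_neg h1, if_pos h2] at h; cases h
    · rw [if_neg h1, if_neg h2, Option.some_inj] at h
      obtain ⟨x, rfl⟩ := Quot.exists_rep q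
      obtain ⟨x', rfl⟩ := Quot.exists_rep q'
      have h' : Quot.mk s x = Quot.mk s x' := h
      have := eqvgen_pair_cases hs (Quot.eq.1 h')
      rcases this with h | ⟨hh1, hh2⟩ | ⟨hh1, hh2⟩
      · exact Quot.eqvGen_sound h
      · exact absurd (Quot.eqvGen_sound hh1) h1
      · exact absurd (Quot.eqvGen_sound (EqvGen.symm _ _ hh2)) h2

theorem card_quot_le_succ
    (hs : ∀ x y, s x y ↔ r x y ∨ (x = a ∧ y = b) ∨ (x = b ∧ y = a)) :
    Nat.card (Quot r) ≤ Nat.card (Quot s) + 1 := by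
  have fs : Finite (Quot s) := Finite.of_surjective (Quot.mk s) (fun q => Quot.exists_rep q)
  have ft : Fintype (Quot s) := Fintype.ofFinite _
  have := Nat.card_le_card_of_injective _ (jmap_injective hs)
  have hopt : Nat.card (Option (Quot s)) = Nat.card (Quot s) + 1 := by
    simp [Nat.card_eq_fintype_card]
  omega

theorem card_quot_of_not_conn
    (hs : ∀ x y, s x y ↔ r x y ∨ (x = a ∧ y = b) ∨ (x = b ∧ y = a))
    (hab : ¬ EqvGen r a b) : Nat.card (Quot r) = Nat.card (Quot s) + 1 := by
  have fs : Finite (Quot s) := Finite.of_surjective (Quot.mk s) (fun q => Quot.exists_rep q)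
  have hrs : ∀ x y, r x y → s x y := fun x y h => (hs x y).2 (Or.inl h)
  have hsurj : Function.Surjective (Jmap hrs a) := by
    intro o
    match o with
    | none => exact ⟨Quot.mk r a, if_pos rfl⟩
    | some c =>
      obtain ⟨x, rfl⟩ := Quot.exists_rep c
      by_cases hx : Quot.mk r x = Quot.mk r a
      · refine ⟨Quot.mk r b, ?_⟩
        have hba : Quot.mk r b ≠ Quot.mk r a := by
          intro h
          exact hab (EqvGen.symm _ _ (Quot.eq.1 h))
        have : (Fmap hrs) (Quot.mk r b) = Quot.mk s x := by
          have h1 : EqvGen s b a := EqvGen.rel _ _ ((hs b a).2 (Or.inr (Or.inr ⟨rfl, rfl⟩)))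
          have h2 : EqvGen s a x :=
            Relation.EqvGen.mono (fun u v h => hrs u v h) _ _ (EqvGen.symm _ _ (Quot.eq.1 hx))
          exact Quot.eqvGen_sound (h1.trans _ _ _ h2)
        simpa [Jmap, hba] using this
      · refine ⟨Quot.mk r x, ?_⟩
        rw [Jmap, if_neg hx]
        rfl
  have hbij := Nat.card_eq_of_bijective _ ⟨jmap_injective hs, hsurj⟩
  have : Fintype (Quot s) := Fintype.ofFinite _
  simpa [Nat.card_eq_fintype_card] using hbij

theorem card_quot_bot {r : α → α → Prop} (h : ∀ x y, ¬ r x y) :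
    Nat.card (Quot r) = Nat.card α := by
  have key : ∀ x y, EqvGen r x y → x = y := by
    intro x y hxy
    induction hxy with
    | rel x y h' => exact absurd h' (h x y)
    | refl x => rfl
    | symm x y _ ih => exact ih.symm
    | trans x z y _ _ ih1 ih2 => exact ih1.trans ih2
  exact (Nat.card_eq_of_bijective (Quot.mk r)
    ⟨fun x y hxy => key x y (Quot.eq.1 hxy), fun q => Quot.exists_rep q⟩).symm

end QuotCard

section Transfer

open Relation

theorem eqvGen_subtype_iff {W : Finset ℕ} {R : ℕ → ℕ → Prop}
    (hR : ∀ x y, R x y → x ∈ W ∧ y ∈ W) (u v : {x // x ∈ W}) :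
    EqvGen (fun a b : {x // x ∈ W} => R a.1 b.1) u v ↔ EqvGen R u.1 v.1 := by
  constructor
  · intro h
    induction h with
    | rel x y h => exact EqvGen.rel _ _ h
    | refl x => exact EqvGen.refl _
    | symm x y _ ih => exact EqvGen.symm _ _ ih
    | trans x z y _ _ ih1 ih2 => exact ih1.trans _ _ _ ih2
  · intro h
    have aux : ∀ x y : ℕ, EqvGen R x y → (x ∈ W ↔ y ∈ W) ∧
        ∀ (hx : x ∈ W) (hy : y ∈ W),
          EqvGen (fun a b : {x // x ∈ W} => R a.1 b.1) ⟨x, hx⟩ ⟨y, hy⟩ := by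
      intro x y h
      induction h with
      | rel x y h =>
        exact ⟨by simp [(hR _ _ h).1, (hR _ _ h).2], fun hx hy => EqvGen.rel _ _ h⟩
      | refl x => exact ⟨Iff.rfl, fun hx hy => EqvGen.refl _⟩
      | symm x y _ ih => exact ⟨ih.1.symm, fun hx hy => EqvGen.symm _ _ (ih.2 hy hx)⟩
      | trans x z y _ _ ih1 ih2 =>
        refine ⟨ih1.1.trans ih2.1, fun hx hy => ?_⟩
        have hz : z ∈ W := ih1.1.1 hx
        exact (ih1.2 hx hz).trans _ _ _ (ih2.2 hz hy)
    exact (aux u.1 v.1 h).2 u.2 v.2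

end Transfer

namespace WGraph

variable (G : WGraph)

theorem adjOn_mem_V {F : Finset ℕ} {x y : ℕ} (h : G.adjOn F x y) : x ∈ G.V ∧ y ∈ G.V := by
  obtain ⟨e, he, h⟩ := h
  have heE : e ∈ G.E := (Finset.mem_inter.1 he).2
  have hm := G.ends_mem e heE
  rcases h with h | h <;> rw [h] at hm
  · exact hm
  · exact ⟨hm.2, hm.1⟩

theorem adjOn_mono {F F' : Finset ℕ} (h : F ⊆ F') {x y : ℕ} (hh : G.adjOn F x y) :
    G.adjOn F' x y := by
  obtain ⟨e, he, he2⟩ := hh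
  exact ⟨e, Finset.mem_inter.2 ⟨h (Finset.mem_inter.1 he).1, (Finset.mem_inter.1 he).2⟩, he2⟩

theorem eqvGen_adjOn_mono {F F' : Finset ℕ} (h : F ⊆ F') {x y : ℕ}
    (hh : Relation.EqvGen (G.adjOn F) x y) : Relation.EqvGen (G.adjOn F') x y :=
  Relation.EqvGen.mono (fun _ _ hr => G.adjOn_mono h hr) _ _ hh

theorem ncomp_def (W F : Finset ℕ) :
    G.ncomp W F = Nat.card (Quot fun u v : {x : ℕ // x ∈ W} => G.adjOn F u.1 v.1) := rfl

theorem adjOn_congr {F F' : Finset ℕ} (h : F ∩ G.E = F' ∩ G.E) : G.adjOn F = G.adjOn F' := by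
  funext u v
  unfold adjOn
  rw [h]

theorem ncomp_congr (W : Finset ℕ) {F F' : Finset ℕ} (h : F ∩ G.E = F' ∩ G.E) :
    G.ncomp W F = G.ncomp W F' := by
  unfold ncomp
  rw [show G.adjOn F = G.adjOn F' from G.adjOn_congr h]

theorem ncomp_of_inter_empty {W F : Finset ℕ} (h : F ∩ G.E = ∅) : G.ncomp W F = W.card := by
  have hb : ∀ u v : {x : ℕ // x ∈ W}, ¬ G.adjOn F u.1 v.1 := by
    rintro u v ⟨e, he, -⟩
    rw [h] at he
    exact absurd he (Finset.notMem_empty e)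
  rw [ncomp_def, card_quot_bot hb, Nat.card_eq_finsetCard]

theorem adjOn_insert_iff {F : Finset ℕ} {e : ℕ} (heE : e ∈ G.E) (x y : ℕ) :
    G.adjOn (insert e F) x y ↔ G.adjOn F x y ∨
      (x = (G.ends e).1 ∧ y = (G.ends e).2) ∨ (x = (G.ends e).2 ∧ y = (G.ends e).1) := by
  unfold adjOn
  constructor
  · rintro ⟨e', he', h⟩
    rw [Finset.mem_inter, Finset.mem_insert] at he'
    rcases he'.1 with rfl | hmem
    · rcases h with h | h
      · exact Or.inr (Or.inl ⟨(congrArg Prod.fst h).symm, (congrArg Prod.snd h).symm⟩)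
      · exact Or.inr (Or.inr ⟨(congrArg Prod.snd h).symm, (congrArg Prod.fst h).symm⟩)
    · exact Or.inl ⟨e', Finset.mem_inter.2 ⟨hmem, he'.2⟩, h⟩
  · rintro (⟨e', he', h⟩ | ⟨rfl, rfl⟩ | ⟨rfl, rfl⟩)
    · exact ⟨e', Finset.mem_inter.2 ⟨Finset.mem_insert_of_mem (Finset.mem_inter.1 he').1,
        (Finset.mem_inter.1 he').2⟩, h⟩
    · exact ⟨e, Finset.mem_inter.2 ⟨Finset.mem_insert_self _ _, heE⟩, Or.inl Prod.mk.eta.symm⟩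
    · exact ⟨e, Finset.mem_inter.2 ⟨Finset.mem_insert_self _ _, heE⟩, Or.inr Prod.mk.eta.symm⟩

theorem ncomp_sdiff_insert {S : Finset ℕ} {e : ℕ} (heE : e ∈ G.E) (heS : e ∉ S) :
    (Relation.EqvGen (G.adjOn (G.E \ insert e S)) (G.ends e).1 (G.ends e).2 →
      G.ncomp G.V (G.E \ insert e S) = G.ncomp G.V (G.E \ S)) ∧
    (¬ Relation.EqvGen (G.adjOn (G.E \ insert e S)) (G.ends e).1 (G.ends e).2 →
      G.ncomp G.V (G.E \ insert e S) = G.ncomp G.V (G.E \ S) + 1) := by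
  have hA : (G.ends e).1 ∈ G.V := (G.ends_mem e heE).1
  have hB : (G.ends e).2 ∈ G.V := (G.ends_mem e heE).2
  have hset : G.E \ S = insert e (G.E \ insert e S) := by
    ext g
    simp only [Finset.mem_sdiff, Finset.mem_insert]
    constructor
    · rintro ⟨h1, h2⟩
      by_cases hg : g = e
      · exact Or.inl hg
      · exact Or.inr ⟨h1, fun hc => hc.elim hg h2⟩
    · rintro (rfl | ⟨h1, h2⟩)
      · exact ⟨heE, heS⟩
      · exact ⟨h1, fun hh => h2 (Or.inr hh)⟩
  have hs : ∀ u v : {x : ℕ // x ∈ G.V}, G.adjOn (G.E \ S) u.1 v.1 ↔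
      G.adjOn (G.E \ insert e S) u.1 v.1 ∨
        (u = ⟨(G.ends e).1, hA⟩ ∧ v = ⟨(G.ends e).2, hB⟩) ∨
        (u = ⟨(G.ends e).2, hB⟩ ∧ v = ⟨(G.ends e).1, hA⟩) := by
    intro u v
    rw [hset, G.adjOn_insert_iff heE]
    simp [Subtype.ext_iff]
  have htrans := fun (h : Relation.EqvGen (G.adjOn (G.E \ insert e S)) (G.ends e).1 (G.ends e).2) =>
    (eqvGen_subtype_iff (fun x y hxy => G.adjOn_mem_V hxy)
      (⟨(G.ends e).1, hA⟩ : {x : ℕ // x ∈ G.V}) ⟨(G.ends e).2, hB⟩).2 h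
  constructor
  · intro hconn
    exact card_quot_of_conn hs (htrans hconn)
  · intro hnc
    refine card_quot_of_not_conn hs (fun hc => hnc ?_)
    exact (eqvGen_subtype_iff (fun x y hxy => G.adjOn_mem_V hxy) _ _).1 hc

theorem isBridge_iff {S : Finset ℕ} {e : ℕ} :
    G.IsBridge S e ↔ e ∈ G.E \ S ∧
      ¬ Relation.EqvGen (G.adjOn (G.E \ insert e S)) (G.ends e).1 (G.ends e).2 := by
  constructor
  · rintro ⟨he, hlt⟩
    have he' := Finset.mem_sdiff.1 he
    refine ⟨he, fun hconn => ?_⟩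
    have := (G.ncomp_sdiff_insert he'.1 he'.2).1 hconn
    omega
  · rintro ⟨he, hnc⟩
    have he' := Finset.mem_sdiff.1 he
    have := (G.ncomp_sdiff_insert he'.1 he'.2).2 hnc
    exact ⟨he, by omega⟩

theorem ncomp_of_isBridge {S : Finset ℕ} {e : ℕ} (h : G.IsBridge S e) :
    G.ncomp G.V (G.E \ insert e S) = G.ncomp G.V (G.E \ S) + 1 := by
  have he' := Finset.mem_sdiff.1 h.1
  exact (G.ncomp_sdiff_insert he'.1 he'.2).2 (G.isBridge_iff.1 h).2

theorem mem_bridges {S : Finset ℕ} {e : ℕ} : e ∈ G.bridges S ↔ G.IsBridge S e := by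
  unfold bridges
  rw [Finset.mem_filter]
  exact ⟨fun h => h.2, fun h => ⟨h.1, h⟩⟩

theorem nonbridge_persists {S : Finset ℕ} {e f : ℕ} (hf : G.IsBridge S f) (hef : e ≠ f)
    (heE : e ∈ G.E) (heS : e ∉ S)
    (h : Relation.EqvGen (G.adjOn (G.E \ insert e S)) (G.ends e).1 (G.ends e).2) :
    Relation.EqvGen (G.adjOn (G.E \ insert e (insert f S))) (G.ends e).1 (G.ends e).2 := by
  have hfm := Finset.mem_sdiff.1 hf.1
  have hfE := hfm.1
  have hfS := hfm.2
  have hnc : ¬ Relation.EqvGen (G.adjOn (G.E \ insert f S)) (G.ends f).1 (G.ends f).2 :=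
    (G.isBridge_iff.1 hf).2
  have hset : G.E \ insert e S = insert f (G.E \ insert e (insert f S)) := by
    ext g
    simp only [Finset.mem_sdiff, Finset.mem_insert]
    constructor
    · rintro ⟨h1, h2⟩
      by_cases hg : g = f
      · exact Or.inl hg
      · exact Or.inr ⟨h1, fun hc => hc.elim (fun hh => h2 (Or.inl hh))
          (fun hc2 => hc2.elim hg (fun hh => h2 (Or.inr hh)))⟩
    · rintro (rfl | ⟨h1, h2⟩)
      · exact ⟨hfE, fun hc => hc.elim (fun hh => hef hh.symm) hfS⟩
      · exact ⟨h1, fun hc => hc.elim (fun hh => h2 (Or.inl hh))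
          (fun hh => h2 (Or.inr (Or.inr hh)))⟩
  rw [hset] at h
  have hsub : G.E \ insert e (insert f S) ⊆ G.E \ insert f S :=
    Finset.sdiff_subset_sdiff (le_refl _) (by
      intro g hg
      rcases Finset.mem_insert.1 hg with rfl | hg'
      · exact Finset.mem_insert_of_mem (Finset.mem_insert_self _ _)
      · exact Finset.mem_insert_of_mem (Finset.mem_insert_of_mem hg'))
  have hestep : G.adjOn (G.E \ insert f S) (G.ends e).1 (G.ends e).2 := by
    refine ⟨e, Finset.mem_inter.2 ⟨Finset.mem_sdiff.2 ⟨heE, fun hc => ?_⟩, heE⟩,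
      Or.inl Prod.mk.eta.symm⟩
    exact (Finset.mem_insert.1 hc).elim hef heS
  rcases eqvgen_pair_cases (fun x y => G.adjOn_insert_iff hfE x y) h with h' | ⟨h1, h2⟩ | ⟨h1, h2⟩
  · exact h'
  · exfalso
    apply hnc
    have c1 : Relation.EqvGen (G.adjOn (G.E \ insert f S)) (G.ends f).1 (G.ends e).1 :=
      Relation.EqvGen.symm _ _ (G.eqvGen_adjOn_mono hsub h1)
    have c2 : Relation.EqvGen (G.adjOn (G.E \ insert f S)) (G.ends e).2 (G.ends f).2 :=
      Relation.EqvGen.symm _ _ (G.eqvGen_adjOn_mono hsub h2)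
    exact (c1.trans _ _ _ (Relation.EqvGen.rel _ _ hestep)).trans _ _ _ c2
  · exfalso
    apply hnc
    have c1 : Relation.EqvGen (G.adjOn (G.E \ insert f S)) (G.ends f).1 (G.ends e).2 :=
      G.eqvGen_adjOn_mono hsub h2
    have c2 : Relation.EqvGen (G.adjOn (G.E \ insert f S)) (G.ends e).1 (G.ends f).2 :=
      G.eqvGen_adjOn_mono hsub h1
    exact (c1.trans _ _ _ (Relation.EqvGen.symm _ _ (Relation.EqvGen.rel _ _ hestep))).trans _ _ _ c2

theorem bridges_insert {S : Finset ℕ} {f : ℕ} (hf : f ∈ G.bridges S) :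
    G.bridges (insert f S) = G.bridges S \ {f} := by
  have hfB := G.mem_bridges.1 hf
  ext g
  rw [Finset.mem_sdiff, Finset.mem_singleton, G.mem_bridges, G.mem_bridges]
  constructor
  · intro hg
    have hgm := Finset.mem_sdiff.1 hg.1
    have hgf : g ≠ f := fun hc => (hgm.2 (hc ▸ Finset.mem_insert_self _ _))
    have hgS : g ∉ S := fun hc => hgm.2 (Finset.mem_insert_of_mem hc)
    refine ⟨G.isBridge_iff.2 ⟨Finset.mem_sdiff.2 ⟨hgm.1, hgS⟩, fun hc => ?_⟩, hgf⟩
    exact (G.isBridge_iff.1 hg).2 (G.nonbridge_persists hfB hgf hgm.1 hgS hc)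
  · rintro ⟨hg, hgf⟩
    have hgm := Finset.mem_sdiff.1 hg.1
    refine G.isBridge_iff.2 ⟨Finset.mem_sdiff.2 ⟨hgm.1, fun hc => ?_⟩, fun hc => ?_⟩
    · exact (Finset.mem_insert.1 hc).elim hgf hgm.2
    · refine (G.isBridge_iff.1 hg).2 (G.eqvGen_adjOn_mono ?_ hc)
      refine Finset.sdiff_subset_sdiff (le_refl _) ?_
      intro x hx
      rcases Finset.mem_insert.1 hx with rfl | hx'
      · exact Finset.mem_insert_self _ _
      · exact Finset.mem_insert_of_mem (Finset.mem_insert_of_mem hx')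

theorem bridges_union {S B : Finset ℕ} (hB : B ⊆ G.bridges S) :
    G.bridges (S ∪ B) = G.bridges S \ B ∧
      G.ncomp G.V (G.E \ (S ∪ B)) = G.ncomp G.V (G.E \ S) + B.card := by
  revert hB
  induction B using Finset.induction generalizing S with
  | empty =>
    intro hB
    simp
  | @insert f B' hfB ih =>
    intro hB
    have hfS : f ∈ G.bridges S := hB (Finset.mem_insert_self _ _)
    have hins : G.bridges (insert f S) = G.bridges S \ {f} := G.bridges_insert hfS
    have hB' : B' ⊆ G.bridges (insert f S) := by
      rw [hins]
      intro g hg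
      refine Finset.mem_sdiff.2 ⟨hB (Finset.mem_insert_of_mem hg), ?_⟩
      rw [Finset.mem_singleton]
      rintro rfl
      exact hfB hg
    obtain ⟨ih1, ih2⟩ := ih hB'
    have hunion : S ∪ insert f B' = insert f S ∪ B' := by
      ext g
      simp only [Finset.mem_union, Finset.mem_insert]
      tauto
    constructor
    · rw [hunion, ih1, hins]
      ext g
      simp only [Finset.mem_sdiff, Finset.mem_singleton, Finset.mem_insert]
      tauto
    · rw [hunion, ih2, G.ncomp_of_isBridge (G.mem_bridges.1 hfS),
        Finset.card_insert_of_notMem hfB]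
      omega

theorem card_le_ncomp_add (W : Finset ℕ) : ∀ (n : ℕ) (F : Finset ℕ), (F ∩ G.E).card = n →
    W.card ≤ (F ∩ G.E).card + G.ncomp W F := by
  intro n
  induction n with
  | zero =>
    intro F hF
    rw [G.ncomp_of_inter_empty (Finset.card_eq_zero.1 hF)]
    omega
  | succ n ih =>
    intro F hF
    have hne : (F ∩ G.E).Nonempty := by
      rw [← Finset.card_pos, hF]
      omega
    obtain ⟨e, he⟩ := hne
    have heF := (Finset.mem_inter.1 he).1
    have heE := (Finset.mem_inter.1 he).2
    have hins : F = insert e (F.erase e) := (Finset.insert_erase heF).symm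
    have hiE : F.erase e ∩ G.E = (F ∩ G.E).erase e := by
      ext g
      simp only [Finset.mem_erase, Finset.mem_inter]
      tauto
    have hcard' : (F.erase e ∩ G.E).card = n := by
      rw [hiE, Finset.card_erase_of_mem he, hF]
      omega
    have hkey : G.ncomp W (F.erase e) ≤ G.ncomp W F + 1 := by
      by_cases hAB : (G.ends e).1 ∈ W ∧ (G.ends e).2 ∈ W
      · obtain ⟨hA, hB⟩ := hAB
        have hs : ∀ u v : {x : ℕ // x ∈ W}, G.adjOn F u.1 v.1 ↔
            G.adjOn (F.erase e) u.1 v.1 ∨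
              (u = ⟨(G.ends e).1, hA⟩ ∧ v = ⟨(G.ends e).2, hB⟩) ∨
              (u = ⟨(G.ends e).2, hB⟩ ∧ v = ⟨(G.ends e).1, hA⟩) := by
          intro u v
          conv_lhs => rw [hins]
          rw [G.adjOn_insert_iff heE]
          simp [Subtype.ext_iff]
        exact card_quot_le_succ hs
      · have hrel : (fun u v : {x : ℕ // x ∈ W} => G.adjOn F u.1 v.1)
            = (fun u v : {x : ℕ // x ∈ W} => G.adjOn (F.erase e) u.1 v.1) := by
          funext u v
          apply propext
          constructor
          · intro h
            rw [hins, G.adjOn_insert_iff heE] at h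
            rcases h with h | ⟨h1, h2⟩ | ⟨h1, h2⟩
            · exact h
            · exact absurd ⟨h1 ▸ u.2, h2 ▸ v.2⟩ hAB
            · exact absurd ⟨h2 ▸ v.2, h1 ▸ u.2⟩ hAB
          · exact fun h => G.adjOn_mono (Finset.erase_subset _ _) h
        unfold ncomp
        rw [hrel]
        omega
    have := ih (F.erase e) hcard'
    omega

end WGraph

namespace WGraph

variable (G : WGraph)

theorem conRel_mem {S₀ : Finset ℕ} {x y : ℕ} (h : G.conRel S₀ x y) : x ∈ G.V ∧ y ∈ G.V :=
  G.adjOn_mem_V (h : G.adjOn S₀ x y)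

theorem crep_eqvGen (S₀ : Finset ℕ) (v : ℕ) :
    Relation.EqvGen (G.conRel S₀) (G.crep S₀ v) v :=
  Nat.sInf_mem (⟨v, Relation.EqvGen.refl v⟩ :
    Set.Nonempty {u | Relation.EqvGen (G.conRel S₀) u v})

theorem crep_eq_of_eqvGen {S₀ : Finset ℕ} {u v : ℕ}
    (h : Relation.EqvGen (G.conRel S₀) u v) : G.crep S₀ u = G.crep S₀ v := by
  unfold crep
  congr 1
  ext x
  simp only [Set.mem_setOf_eq]
  exact ⟨fun hx => hx.trans _ _ _ h, fun hx => hx.trans _ _ _ (Relation.EqvGen.symm _ _ h)⟩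

theorem crep_eq_iff {S₀ : Finset ℕ} {u v : ℕ} :
    G.crep S₀ u = G.crep S₀ v ↔ Relation.EqvGen (G.conRel S₀) u v := by
  refine ⟨fun h => ?_, G.crep_eq_of_eqvGen⟩
  have h1 := Relation.EqvGen.symm _ _ (G.crep_eqvGen S₀ u)
  have h2 := G.crep_eqvGen S₀ v
  rw [h] at h1
  exact h1.trans _ _ _ h2

theorem eqvGen_conRel_to_adjOn {S₀ F : Finset ℕ} {a b : ℕ} (hFS : S₀ ⊆ F)
    (h : Relation.EqvGen (G.conRel S₀) a b) : Relation.EqvGen (G.adjOn F) a b :=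
  Relation.EqvGen.mono (fun u v hr => G.adjOn_mono hFS (hr : G.adjOn S₀ u v)) _ _ h

theorem contract_adj_lift {S₀ F : Finset ℕ} (hF : F ⊆ G.E \ S₀)
    {x y : ℕ} (h : Relation.EqvGen ((G.contract S₀).adjOn F) x y) :
    (x ∈ (G.contract S₀).V ↔ y ∈ (G.contract S₀).V) ∧
    ∀ p q, p ∈ G.V → q ∈ G.V → G.crep S₀ p = x → G.crep S₀ q = y →
      Relation.EqvGen (G.adjOn (F ∪ S₀)) p q := by
  induction h with
  | rel x y h =>
    obtain ⟨e, he, hh⟩ := h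
    have heF : e ∈ F := (Finset.mem_inter.1 he).1
    have heHE : e ∈ (G.contract S₀).E := (Finset.mem_inter.1 he).2
    have heE : e ∈ G.E := (Finset.mem_sdiff.1 heHE).1
    constructor
    · have h1 := (G.contract S₀).ends_mem e heHE
      rcases hh with hh | hh <;> rw [hh] at h1
      · simp [h1.1, h1.2]
      · simp [h1.1, h1.2]
    · intro p q hpV hqV hpx hqy
      have hstep : G.adjOn (F ∪ S₀) (G.ends e).1 (G.ends e).2 :=
        ⟨e, Finset.mem_inter.2 ⟨Finset.mem_union_left _ heF, heE⟩, Or.inl Prod.mk.eta.symm⟩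
      rcases hh with hh | hh
      · have h1 : G.crep S₀ (G.ends e).1 = x := congrArg Prod.fst hh
        have h2 : G.crep S₀ (G.ends e).2 = y := congrArg Prod.snd hh
        have e1 : Relation.EqvGen (G.conRel S₀) p (G.ends e).1 :=
          G.crep_eq_iff.1 (hpx.trans h1.symm)
        have e2 : Relation.EqvGen (G.conRel S₀) (G.ends e).2 q :=
          G.crep_eq_iff.1 (h2.trans hqy.symm)
        exact ((G.eqvGen_conRel_to_adjOn Finset.subset_union_right e1).trans _ _ _
          (Relation.EqvGen.rel _ _ hstep)).trans _ _ _
            (G.eqvGen_conRel_to_adjOn Finset.subset_union_right e2)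
      · have h1 : G.crep S₀ (G.ends e).1 = y := congrArg Prod.fst hh
        have h2 : G.crep S₀ (G.ends e).2 = x := congrArg Prod.snd hh
        have e1 : Relation.EqvGen (G.conRel S₀) p (G.ends e).2 :=
          G.crep_eq_iff.1 (hpx.trans h2.symm)
        have e2 : Relation.EqvGen (G.conRel S₀) (G.ends e).1 q :=
          G.crep_eq_iff.1 (h1.trans hqy.symm)
        exact ((G.eqvGen_conRel_to_adjOn Finset.subset_union_right e1).trans _ _ _
          (Relation.EqvGen.symm _ _ (Relation.EqvGen.rel _ _ hstep))).trans _ _ _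
            (G.eqvGen_conRel_to_adjOn Finset.subset_union_right e2)
  | refl x =>
    refine ⟨Iff.rfl, fun p q hpV hqV hpx hqy => ?_⟩
    exact G.eqvGen_conRel_to_adjOn Finset.subset_union_right
      (G.crep_eq_iff.1 (hpx.trans hqy.symm))
  | symm x y _ ih =>
    exact ⟨ih.1.symm, fun p q hp hq hpy hqx =>
      Relation.EqvGen.symm _ _ (ih.2 q p hq hp hqx hpy)⟩
  | trans x z y _ _ ih1 ih2 =>
    refine ⟨ih1.1.trans ih2.1, fun p q hp hq hpx hqy => ?_⟩
    have hxH : x ∈ (G.contract S₀).V := by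
      rw [← hpx]
      exact Finset.mem_image_of_mem _ hp
    have hzH : z ∈ (G.contract S₀).V := ih1.1.1 hxH
    obtain ⟨m, hm, hmz⟩ := Finset.mem_image.1 hzH
    exact (ih1.2 p m hp hm hpx hmz).trans _ _ _ (ih2.2 m q hm hq hmz hqy)

theorem ncomp_contract {S₀ : Finset ℕ} (hS₀ : S₀ ⊆ G.E) {F : Finset ℕ}
    (hF : F ⊆ G.E \ S₀) :
    (G.contract S₀).ncomp (G.contract S₀).V F = G.ncomp G.V (F ∪ S₀) := by
  classical
  set H := G.contract S₀ with hH
  let r : {x : ℕ // x ∈ G.V} → {x : ℕ // x ∈ G.V} → Prop :=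
    fun u v => G.adjOn (F ∪ S₀) u.1 v.1
  let ρ : {x : ℕ // x ∈ H.V} → {x : ℕ // x ∈ H.V} → Prop :=
    fun u v => H.adjOn F u.1 v.1
  have hmemH : ∀ u : {x : ℕ // x ∈ G.V}, G.crep S₀ u.1 ∈ H.V := fun u =>
    Finset.mem_image_of_mem _ u.2
  have hwd : ∀ u v : {x : ℕ // x ∈ G.V}, r u v →
      Quot.mk ρ ⟨G.crep S₀ u.1, hmemH u⟩ = Quot.mk ρ ⟨G.crep S₀ v.1, hmemH v⟩ := by
    rintro u v ⟨e, he, hh⟩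
    have heE : e ∈ G.E := (Finset.mem_inter.1 he).2
    rcases Finset.mem_union.1 (Finset.mem_inter.1 he).1 with heF | heS₀
    · refine Quot.sound ⟨e, Finset.mem_inter.2 ⟨heF, hF heF⟩, ?_⟩
      rcases hh with hh | hh
      · refine Or.inl ?_
        show (G.crep S₀ (G.ends e).1, G.crep S₀ (G.ends e).2) = _
        rw [hh]
      · refine Or.inr ?_
        show (G.crep S₀ (G.ends e).1, G.crep S₀ (G.ends e).2) = _
        rw [hh]
    · have : G.crep S₀ u.1 = G.crep S₀ v.1 :=
        G.crep_eq_of_eqvGen (Relation.EqvGen.rel _ _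
          ⟨e, Finset.mem_inter.2 ⟨heS₀, heE⟩, hh⟩)
      congr 1
      exact Subtype.ext this
  let Φ : Quot r → Quot ρ := Quot.lift (fun u => Quot.mk ρ ⟨G.crep S₀ u.1, hmemH u⟩) hwd
  have hbij : Function.Bijective Φ := by
    constructor
    · intro q q'
      obtain ⟨u, rfl⟩ := Quot.exists_rep q
      obtain ⟨v, rfl⟩ := Quot.exists_rep q'
      intro h
      have h' : Quot.mk ρ ⟨G.crep S₀ u.1, hmemH u⟩ = Quot.mk ρ ⟨G.crep S₀ v.1, hmemH v⟩ := h
      have h2 : Relation.EqvGen (H.adjOn F) (G.crep S₀ u.1) (G.crep S₀ v.1) :=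
        (eqvGen_subtype_iff (fun x y hxy => H.adjOn_mem_V hxy) _ _).1 (Quot.eq.1 h')
      have h3 := (G.contract_adj_lift hF h2).2 u.1 v.1 u.2 v.2 rfl rfl
      exact Quot.eqvGen_sound
        ((eqvGen_subtype_iff (fun x y hxy => G.adjOn_mem_V hxy) u v).2 h3)
    · intro q
      obtain ⟨uH, rfl⟩ := Quot.exists_rep q
      obtain ⟨p, hp, hcr⟩ := Finset.mem_image.1 uH.2
      refine ⟨Quot.mk r ⟨p, hp⟩, ?_⟩
      show Quot.mk ρ _ = _
      congr 1
      exact Subtype.ext hcr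
  exact (Nat.card_eq_of_bijective Φ hbij).symm

end WGraph

namespace WGraph

variable (G : WGraph)

theorem contract_E (S₀ : Finset ℕ) : (G.contract S₀).E = G.E \ S₀ := rfl

theorem contract_V (S₀ : Finset ℕ) : (G.contract S₀).V = G.V.image (G.crep S₀) := rfl

theorem adjOn_indEdges_mem {S Z : Finset ℕ} {x y : ℕ} (h : G.adjOn (G.indEdges S Z) x y) :
    x ∈ Z ∧ y ∈ Z := by
  obtain ⟨e, he, hh⟩ := h
  have hm := (Finset.mem_filter.1 (Finset.mem_inter.1 he).1).2
  rcases hh with hh | hh <;> rw [hh] at hm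
  · exact hm
  · exact ⟨hm.2, hm.1⟩

theorem conRel_chain {S₀ : Finset ℕ} {x y : ℕ} (h : Relation.EqvGen (G.conRel S₀) x y) :
    (x ∈ G.V ↔ y ∈ G.V) ∧
    (x ∈ G.V → y ∈ G.V → Relation.EqvGen
      (G.adjOn (G.indEdges (G.E \ S₀)
        (G.V.filter fun u => G.crep S₀ u = G.crep S₀ x))) x y) := by
  induction h with
  | rel x y h =>
    obtain ⟨e, he, hh⟩ := h
    have heS₀ : e ∈ S₀ := (Finset.mem_inter.1 he).1
    have heE : e ∈ G.E := (Finset.mem_inter.1 he).2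
    have hm := G.ends_mem e heE
    have hxy : x ∈ G.V ∧ y ∈ G.V := G.conRel_mem ⟨e, he, hh⟩
    have hcr : G.crep S₀ x = G.crep S₀ y :=
      G.crep_eq_of_eqvGen (Relation.EqvGen.rel _ _ ⟨e, he, hh⟩)
    have hc1 : G.crep S₀ (G.ends e).1 = G.crep S₀ x := by
      rcases hh with hh | hh
      · rw [hh]
      · rw [hh]; exact hcr.symm
    have hc2 : G.crep S₀ (G.ends e).2 = G.crep S₀ x := by
      rcases hh with hh | hh
      · rw [hh]; exact hcr.symm
      · rw [hh]
    have hemem : e ∈ G.indEdges (G.E \ S₀)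
        (G.V.filter fun u => G.crep S₀ u = G.crep S₀ x) := by
      refine Finset.mem_filter.2 ⟨Finset.mem_sdiff.2 ⟨heE, fun hc =>
        (Finset.mem_sdiff.1 hc).2 heS₀⟩, ?_, ?_⟩
      · exact Finset.mem_filter.2 ⟨hm.1, hc1⟩
      · exact Finset.mem_filter.2 ⟨hm.2, hc2⟩
    refine ⟨by simp [hxy.1, hxy.2], fun _ _ => Relation.EqvGen.rel _ _
      ⟨e, Finset.mem_inter.2 ⟨hemem, heE⟩, hh⟩⟩
  | refl x => exact ⟨Iff.rfl, fun _ _ => Relation.EqvGen.refl _⟩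
  | symm x y h ih =>
    refine ⟨ih.1.symm, fun hy hx => ?_⟩
    have hcr : G.crep S₀ x = G.crep S₀ y := G.crep_eq_of_eqvGen h
    rw [← hcr]
    exact Relation.EqvGen.symm _ _ (ih.2 hx hy)
  | trans x z y h1 h2 ih1 ih2 =>
    refine ⟨ih1.1.trans ih2.1, fun hx hy => ?_⟩
    have hz : z ∈ G.V := ih1.1.1 hx
    have hcr : G.crep S₀ x = G.crep S₀ z := G.crep_eq_of_eqvGen h1
    have h2' := ih2.2 hz hy
    rw [← hcr] at h2'
    exact (ih1.2 hx hz).trans _ _ _ h2'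

theorem fiber_conn {S₀ : Finset ℕ} {v : ℕ} (hv : v ∈ (G.contract S₀).V) :
    G.ncomp (G.V.filter fun u => G.crep S₀ u = v)
      (G.indEdges (G.E \ S₀) (G.V.filter fun u => G.crep S₀ u = v)) = 1 := by
  obtain ⟨p, hp, hpv⟩ := Finset.mem_image.1 hv
  rw [ncomp_def, Nat.card_eq_one_iff_unique]
  constructor
  · constructor
    intro q q'
    obtain ⟨u, rfl⟩ := Quot.exists_rep q
    obtain ⟨u', rfl⟩ := Quot.exists_rep q'
    apply Quot.eqvGen_sound
    refine (eqvGen_subtype_iff (fun x y hxy => G.adjOn_indEdges_mem hxy) u u').2 ?_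
    have hu := Finset.mem_filter.1 u.2
    have hu' := Finset.mem_filter.1 u'.2
    have hcr : G.crep S₀ u.1 = G.crep S₀ u'.1 := hu.2.trans hu'.2.symm
    have hchain := (G.conRel_chain (G.crep_eq_iff.1 hcr)).2 hu.1 hu'.1
    rwa [hu.2] at hchain
  · exact ⟨Quot.mk _ ⟨p, Finset.mem_filter.2 ⟨hp, hpv⟩⟩⟩

theorem indEdges_subset_E (S Z : Finset ℕ) : G.indEdges S Z ⊆ G.E := fun e he =>
  (Finset.mem_sdiff.1 (Finset.mem_filter.1 he).1).1

theorem fiber_subGenus_nonneg {S₀ : Finset ℕ} {v : ℕ} (hv : v ∈ (G.contract S₀).V) :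
    0 ≤ G.subGenus (G.V.filter fun u => G.crep S₀ u = v)
      (G.indEdges (G.E \ S₀) (G.V.filter fun u => G.crep S₀ u = v)) := by
  have h1 := G.card_le_ncomp_add (G.V.filter fun u => G.crep S₀ u = v)
    ((G.indEdges (G.E \ S₀) (G.V.filter fun u => G.crep S₀ u = v)) ∩ G.E).card
    (G.indEdges (G.E \ S₀) (G.V.filter fun u => G.crep S₀ u = v)) rfl
  have h2 : 0 ≤ ∑ u ∈ G.V.filter (fun u => G.crep S₀ u = v), (G.w u : ℤ) :=
    Finset.sum_nonneg fun i _ => by positivity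
  unfold subGenus
  have h1' : ((G.V.filter fun u => G.crep S₀ u = v).card : ℤ) ≤
      (((G.indEdges (G.E \ S₀) (G.V.filter fun u => G.crep S₀ u = v)) ∩ G.E).card : ℤ) +
      (G.ncomp (G.V.filter fun u => G.crep S₀ u = v)
        (G.indEdges (G.E \ S₀) (G.V.filter fun u => G.crep S₀ u = v)) : ℤ) := by
    exact_mod_cast h1
  linarith

theorem contract_w_eq {S₀ : Finset ℕ} {v : ℕ} (hv : v ∈ (G.contract S₀).V) :
    (((G.contract S₀).w v : ℕ) : ℤ) = G.subGenus (G.V.filter fun u => G.crep S₀ u = v)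
      (G.indEdges (G.E \ S₀) (G.V.filter fun u => G.crep S₀ u = v)) := by
  show ((Int.toNat _ : ℕ) : ℤ) = _
  rw [Int.toNat_of_nonneg (G.fiber_subGenus_nonneg hv)]

theorem indEdges_fiber {S₀ : Finset ℕ} (hS₀ : S₀ ⊆ G.E) (v : ℕ) :
    G.indEdges (G.E \ S₀) (G.V.filter fun u => G.crep S₀ u = v)
      = S₀.filter fun e => G.crep S₀ (G.ends e).1 = v := by
  ext e
  simp only [indEdges, Finset.mem_filter, Finset.mem_sdiff]
  constructor
  · rintro ⟨⟨heE, heS⟩, h1, h2⟩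
    have heS₀ : e ∈ S₀ := by
      by_contra hc
      exact heS ⟨heE, hc⟩
    exact ⟨heS₀, h1.2⟩
  · rintro ⟨heS₀, hcr⟩
    have heE := hS₀ heS₀
    have hm := G.ends_mem e heE
    have hcr2 : G.crep S₀ (G.ends e).2 = v := by
      have : Relation.EqvGen (G.conRel S₀) (G.ends e).2 (G.ends e).1 :=
        Relation.EqvGen.rel _ _ ⟨e, Finset.mem_inter.2 ⟨heS₀, heE⟩, Or.inr Prod.mk.eta.symm⟩
      exact (G.crep_eq_of_eqvGen this).trans hcr
    exact ⟨⟨heE, fun hc => hc.2 heS₀⟩, ⟨hm.1, hcr⟩, ⟨hm.2, hcr2⟩⟩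

theorem sum_w_contract {S₀ : Finset ℕ} (hS₀ : S₀ ⊆ G.E) :
    ∑ v ∈ (G.contract S₀).V, (((G.contract S₀).w v : ℕ) : ℤ)
      = ∑ v ∈ G.V, (G.w v : ℤ) - G.V.card + (G.contract S₀).V.card + S₀.card := by
  have hW : ∀ v ∈ (G.contract S₀).V, (((G.contract S₀).w v : ℕ) : ℤ)
      = (∑ u ∈ G.V.filter (fun u => G.crep S₀ u = v), (G.w u : ℤ))
        - ((G.V.filter fun u => G.crep S₀ u = v).card : ℤ)
        + ((G.indEdges (G.E \ S₀) (G.V.filter fun u => G.crep S₀ u = v)).card : ℤ) + 1 := by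
    intro v hv
    rw [G.contract_w_eq hv]
    unfold subGenus
    rw [G.fiber_conn hv,
      Finset.inter_eq_left.2 (G.indEdges_subset_E (G.E \ S₀) _)]
    push_cast
    ring
  rw [Finset.sum_congr rfl hW, Finset.sum_add_distrib, Finset.sum_add_distrib,
    Finset.sum_sub_distrib]
  have hmaps : ∀ u ∈ G.V, G.crep S₀ u ∈ (G.contract S₀).V := fun u hu =>
    Finset.mem_image_of_mem _ hu
  have s1 : ∑ v ∈ (G.contract S₀).V, ∑ u ∈ G.V.filter (fun u => G.crep S₀ u = v), (G.w u : ℤ)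
      = ∑ u ∈ G.V, (G.w u : ℤ) :=
    Finset.sum_fiberwise_of_maps_to hmaps _
  have s2 : ∑ v ∈ (G.contract S₀).V, ((G.V.filter fun u => G.crep S₀ u = v).card : ℤ)
      = (G.V.card : ℤ) := by
    have h := Finset.sum_fiberwise_of_maps_to hmaps (fun _ => (1 : ℤ))
    simpa using h
  have s3 : ∑ v ∈ (G.contract S₀).V,
      ((G.indEdges (G.E \ S₀) (G.V.filter fun u => G.crep S₀ u = v)).card : ℤ)
      = (S₀.card : ℤ) := by
    have hmaps' : ∀ e ∈ S₀, G.crep S₀ (G.ends e).1 ∈ (G.contract S₀).V := fun e he =>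
      Finset.mem_image_of_mem _ (G.ends_mem e (hS₀ he)).1
    have h := Finset.sum_fiberwise_of_maps_to hmaps' (fun _ => (1 : ℤ))
    calc ∑ v ∈ (G.contract S₀).V,
        ((G.indEdges (G.E \ S₀) (G.V.filter fun u => G.crep S₀ u = v)).card : ℤ)
        = ∑ v ∈ (G.contract S₀).V,
            ((S₀.filter fun e => G.crep S₀ (G.ends e).1 = v).card : ℤ) := by
          refine Finset.sum_congr rfl fun v hv => ?_
          rw [G.indEdges_fiber hS₀ v]
      _ = (S₀.card : ℤ) := by simpa using h
  rw [s1, s2, s3]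
  simp only [Finset.sum_const, nsmul_eq_mul, mul_one]
  ring

theorem ncomp_contract_sdiff {S₀ : Finset ℕ} (hS₀ : S₀ ⊆ G.E) {U : Finset ℕ}
    (hU : ∀ g ∈ U, g ∉ S₀) :
    (G.contract S₀).ncomp (G.contract S₀).V ((G.contract S₀).E \ U)
      = G.ncomp G.V (G.E \ U) := by
  rw [contract_E, G.ncomp_contract hS₀ Finset.sdiff_subset]
  refine G.ncomp_congr _ ?_
  ext g
  simp only [contract_E, Finset.mem_inter, Finset.mem_union, Finset.mem_sdiff]
  have h1 := fun hg : g ∈ S₀ => hS₀ hg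
  have h2 := fun hg : g ∈ U => hU g hg
  tauto

theorem subGenus_contract {S₀ : Finset ℕ} (hS₀ : S₀ ⊆ G.E) {T : Finset ℕ}
    (hT : T ⊆ (G.contract S₀).E) :
    (G.contract S₀).subGenus (G.contract S₀).V ((G.contract S₀).E \ T)
      = G.subGenus G.V (G.E \ T) := by
  have hTm : ∀ g ∈ T, g ∈ G.E ∧ g ∉ S₀ := fun g hg => Finset.mem_sdiff.1 (hT hg)
  have hc : (G.contract S₀).ncomp (G.contract S₀).V ((G.contract S₀).E \ T)
      = G.ncomp G.V (G.E \ T) := G.ncomp_contract_sdiff hS₀ (fun g hg => (hTm g hg).2)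
  have hcard : ((G.E \ T).card : ℤ) = (((G.contract S₀).E \ T).card : ℤ) + S₀.card := by
    have hdisj : Disjoint ((G.E \ S₀) \ T) S₀ :=
      Finset.disjoint_of_subset_left Finset.sdiff_subset Finset.sdiff_disjoint
    have hun : G.E \ T = ((G.E \ S₀) \ T) ∪ S₀ := by
      ext e
      simp only [Finset.mem_sdiff, Finset.mem_union]
      have h1 := fun he : e ∈ S₀ => hS₀ he
      have h2 := fun he : e ∈ T => hTm e he
      tauto
    rw [contract_E, hun, Finset.card_union_of_disjoint hdisj]
    push_cast
    ring
  unfold subGenus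
  rw [hc, G.sum_w_contract hS₀, Finset.inter_eq_left.2 Finset.sdiff_subset,
    Finset.inter_eq_left.2 Finset.sdiff_subset]
  linarith

theorem isBridge_contract {S₀ : Finset ℕ} (hS₀ : S₀ ⊆ G.E) {U : Finset ℕ}
    (hU : U ⊆ (G.contract S₀).E) {e : ℕ} :
    (G.contract S₀).IsBridge U e ↔ e ∉ S₀ ∧ G.IsBridge U e := by
  have hUm : ∀ g ∈ U, g ∈ G.E ∧ g ∉ S₀ := fun g hg => Finset.mem_sdiff.1 (hU hg)
  by_cases heS₀ : e ∈ S₀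
  · constructor
    · rintro ⟨hem, -⟩
      exact absurd heS₀ (Finset.mem_sdiff.1 (Finset.mem_sdiff.1 hem).1).2
    · rintro ⟨h, -⟩
      exact absurd heS₀ h
  · have hc1 : (G.contract S₀).ncomp (G.contract S₀).V ((G.contract S₀).E \ U)
        = G.ncomp G.V (G.E \ U) := G.ncomp_contract_sdiff hS₀ (fun g hg => (hUm g hg).2)
    have hc2 : (G.contract S₀).ncomp (G.contract S₀).V ((G.contract S₀).E \ insert e U)
        = G.ncomp G.V (G.E \ insert e U) := by
      refine G.ncomp_contract_sdiff hS₀ (fun g hg => ?_)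
      rcases Finset.mem_insert.1 hg with rfl | hg'
      · exact heS₀
      · exact (hUm g hg').2
    unfold IsBridge
    rw [hc1, hc2, contract_E]
    constructor
    · rintro ⟨hm, hlt⟩
      have hm' := Finset.mem_sdiff.1 hm
      exact ⟨heS₀, Finset.mem_sdiff.2 ⟨(Finset.mem_sdiff.1 hm'.1).1, hm'.2⟩, hlt⟩
    · rintro ⟨-, hm, hlt⟩
      have hm' := Finset.mem_sdiff.1 hm
      exact ⟨Finset.mem_sdiff.2 ⟨Finset.mem_sdiff.2 ⟨hm'.1, heS₀⟩, hm'.2⟩, hlt⟩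

theorem bridges_contract {S₀ : Finset ℕ} (hS₀ : S₀ ⊆ G.E) {U : Finset ℕ}
    (hU : U ⊆ (G.contract S₀).E) :
    (G.contract S₀).bridges U = G.bridges U \ S₀ := by
  ext e
  rw [Finset.mem_sdiff, WGraph.mem_bridges, WGraph.mem_bridges, G.isBridge_contract hS₀ hU]
  tauto

theorem pullStar_zero (T : Finset ℕ) : G.pullStar 0 T = T ∪ G.bridges T := by
  simp [pullStar]

theorem pullStar_one (T : Finset ℕ) : G.pullStar 1 T = T := by
  simp [pullStar]

end WGraph


/-- Pullback `γ* T` (`:= T ∪ (G−T)_br` if `b = 0`, `:= T` if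
`b = 1`) along a contraction `γ : G → H = G/S₀`: (a) `γ* T ∈ A^b_G` and
`g(H − T) = g(G − γ* T)`; (b) monotone; (c) contravariantly functorial. -/
theorem pullback_contravariant_functor (G : WGraph) (b : ℕ) (hb : b = 0 ∨ b = 1)
    (S₀ : Finset ℕ) (hS₀ : S₀ ⊆ G.E) :
    (∀ T, (G.contract S₀).Ab b T →
      G.Ab b (G.pullStar b T) ∧
      (G.contract S₀).subGenus (G.contract S₀).V ((G.contract S₀).E \ T)
        = G.subGenus G.V (G.E \ G.pullStar b T)) ∧
    (∀ T R, (G.contract S₀).Ab b T → (G.contract S₀).Ab b R → T ⊆ R →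
      G.pullStar b T ⊆ G.pullStar b R) ∧
    (∀ T₀, T₀ ⊆ (G.contract S₀).E →
      ∀ U, ((G.contract S₀).contract T₀).Ab b U →
        G.pullStar b ((G.contract S₀).pullStar b U) = G.pullStar b U) := by
    classical
  have hHE : (G.contract S₀).E ⊆ G.E := by
    rw [WGraph.contract_E]
    exact Finset.sdiff_subset
  refine ⟨?_, ?_, ?_⟩
  · -- part (a)
    intro T hT
    obtain ⟨hTE, hTcase⟩ := hT
    rcases hb with rfl | rfl
    · -- b = 0
      rw [G.pullStar_zero]
      obtain ⟨hbr, hnc⟩ := G.bridges_union (le_refl (G.bridges T))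
      have hBsub : G.bridges T ⊆ G.E \ T := Finset.filter_subset _ _
      constructor
      · refine ⟨Finset.union_subset (hTE.trans hHE)
          (fun e he => (Finset.mem_sdiff.1 (G.mem_bridges.1 he).1).1),
          Or.inl ⟨rfl, fun e hcon => ?_⟩⟩
        have hmem : e ∈ G.bridges (T ∪ G.bridges T) := G.mem_bridges.2 hcon
        rw [hbr] at hmem
        exact absurd hmem (by simp)
      · rw [G.subGenus_contract hS₀ hTE]
        unfold WGraph.subGenus
        rw [hnc, Finset.inter_eq_left.2 Finset.sdiff_subset,
          Finset.inter_eq_left.2 Finset.sdiff_subset]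
        have hEq : G.E \ (T ∪ G.bridges T) = (G.E \ T) \ G.bridges T := by
          ext g
          simp only [Finset.mem_sdiff, Finset.mem_union]
          tauto
        have hle : (G.bridges T).card ≤ (G.E \ T).card := Finset.card_le_card hBsub
        have hcard : ((G.E \ (T ∪ G.bridges T)).card : ℤ)
            = ((G.E \ T).card : ℤ) - (G.bridges T).card := by
          rw [hEq, Finset.card_sdiff_of_subset hBsub]
          push_cast [hle]
          ring
        rw [hcard]
        push_cast
        ring
    · -- b = 1
      rw [G.pullStar_one]
      have hconn : (G.contract S₀).ConnSub (G.contract S₀).V ((G.contract S₀).E \ T) := by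
        rcases hTcase with ⟨h0, -⟩ | ⟨-, hconn⟩
        · exact absurd h0 one_ne_zero
        · exact hconn
      have hc : (G.contract S₀).ncomp (G.contract S₀).V ((G.contract S₀).E \ T)
          = G.ncomp G.V (G.E \ T) :=
        G.ncomp_contract_sdiff hS₀ (fun g hg => (Finset.mem_sdiff.1 (hTE hg)).2)
      constructor
      · refine ⟨hTE.trans hHE, Or.inr ⟨rfl, ?_⟩⟩
        show G.ncomp G.V (G.E \ T) = 1
        rw [← hc]
        exact hconn
      · exact G.subGenus_contract hS₀ hTE
  · -- part (b)
    intro T R hT hR hsub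
    rcases hb with rfl | rfl
    · rw [G.pullStar_zero, G.pullStar_zero]
      refine Finset.union_subset (hsub.trans Finset.subset_union_left) ?_
      intro e he
      have heB := G.mem_bridges.1 he
      by_cases heR : e ∈ R
      · exact Finset.mem_union_left _ heR
      · refine Finset.mem_union_right _ (G.mem_bridges.2 (G.isBridge_iff.2 ⟨?_, ?_⟩))
        · exact Finset.mem_sdiff.2 ⟨(Finset.mem_sdiff.1 heB.1).1, heR⟩
        · intro hc
          refine (G.isBridge_iff.1 heB).2 (G.eqvGen_adjOn_mono ?_ hc)
          exact Finset.sdiff_subset_sdiff (le_refl _) (Finset.insert_subset_insert _ hsub)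
    · rw [G.pullStar_one, G.pullStar_one]
      exact hsub
  · -- part (c)
    intro T₀ hT₀ U hU
    rcases hb with rfl | rfl
    · simp only [WGraph.pullStar_zero]
      have hUE : U ⊆ (G.contract S₀).E := hU.1.trans Finset.sdiff_subset
      have hbr : (G.contract S₀).bridges U = G.bridges U \ S₀ := G.bridges_contract hS₀ hUE
      have hsubbr : G.bridges U \ S₀ ⊆ G.bridges U := Finset.sdiff_subset
      obtain ⟨h1, -⟩ := G.bridges_union hsubbr
      rw [hbr, h1]
      ext g
      simp only [Finset.mem_union, Finset.mem_sdiff]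
      tauto
    · simp only [WGraph.pullStar_one]
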